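/- Let T be the d-regular rooted tree, D ≥ 1, and P ≤ Aut(T^D) a subgroup. Then P is a minimal pattern subgroup (i.e. π_D(G_P) = P) if and only if P is closed under patterns of itself, i.e. for every p ∈ P and every level-one vertex x, the section p|_x ∈ Aut(T^{D−1}) lies in π_{D−1}(P). -/

import Mathlib

namespace TreeFT

/-- Vertices of the `d`-regular rooted tree: finite words over `Fin d`. -/
abbrev Vertex (d : ℕ) := List (Fin d)

/-- The automorphism group of the `d`-regular rooted tree, realized as the subgroup of
permutations of the vertex set that preserve length (levels) and prefixes (adjacency). -/
def treeAut (d : ℕ) : Subgroup (Equiv.Perm (Vertex d)) where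
  carrier := {g | (∀ v : Vertex d, (g v).length = v.length) ∧
      (∀ v w : Vertex d, (g (v ++ w)).take v.length = g v)}
  one_mem' := ⟨fun _ => rfl, fun v w => List.take_left⟩
  mul_mem' := by
    rintro g h ⟨hg1, hg2⟩ ⟨hh1, hh2⟩
    refine ⟨fun v => by rw [Equiv.Perm.mul_apply, hg1, hh1], fun v w => ?_⟩
    have h1 : h (v ++ w) = h v ++ (h (v ++ w)).drop v.length := by
      conv_lhs => rw [← List.take_append_drop v.length (h (v ++ w))]
      rw [hh2]
    rw [Equiv.Perm.mul_apply, Equiv.Perm.mul_apply, h1]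
    have h2 : v.length = (h v).length := (hh1 v).symm
    rw [h2]
    exact hg2 _ _
  inv_mem' := by
    rintro g ⟨hg1, hg2⟩
    constructor
    · intro v
      have h := hg1 (g⁻¹ v)
      rw [← Equiv.Perm.mul_apply, mul_inv_cancel, Equiv.Perm.one_apply] at h
      exact h.symm
    · intro v w
      apply g.injective
      have hlen : v.length ≤ (g⁻¹ (v ++ w)).length := by
        have h := hg1 (g⁻¹ (v ++ w))
        rw [← Equiv.Perm.mul_apply, mul_inv_cancel, Equiv.Perm.one_apply] at h
        rw [← h, List.length_append]
        exact Nat.le_add_right _ _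
      have h3 := hg2 ((g⁻¹ (v ++ w)).take v.length) ((g⁻¹ (v ++ w)).drop v.length)
      rw [List.take_append_drop, ← Equiv.Perm.mul_apply, mul_inv_cancel, Equiv.Perm.one_apply, List.length_take,
        min_eq_left hlen, List.take_left] at h3
      rw [← h3, ← Equiv.Perm.mul_apply, mul_inv_cancel, Equiv.Perm.one_apply]

variable {d : ℕ}

/-- `Aut(T)` as a type. -/
abbrev TAut (d : ℕ) := ↥(treeAut d)

lemma length_apply (g : TAut d) (v : Vertex d) :
    ((g : Equiv.Perm (Vertex d)) v).length = v.length := g.2.1 v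

lemma take_apply (g : TAut d) (v w : Vertex d) :
    ((g : Equiv.Perm (Vertex d)) (v ++ w)).take v.length = (g : Equiv.Perm (Vertex d)) v :=
  g.2.2 v w

lemma apply_append (g : TAut d) (v w : Vertex d) :
    (g : Equiv.Perm (Vertex d)) (v ++ w) =
      (g : Equiv.Perm (Vertex d)) v ++ ((g : Equiv.Perm (Vertex d)) (v ++ w)).drop v.length := by
  conv_lhs => rw [← List.take_append_drop v.length ((g : Equiv.Perm (Vertex d)) (v ++ w))]
  rw [take_apply]

/-- The section `g|_v` of a tree automorphism at the vertex `v`. -/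
def sect (g : TAut d) (v : Vertex d) : TAut d :=
  ⟨{ toFun := fun w => ((g : Equiv.Perm (Vertex d)) (v ++ w)).drop v.length
     invFun := fun w =>
       (((g : Equiv.Perm (Vertex d)))⁻¹ ((g : Equiv.Perm (Vertex d)) v ++ w)).drop v.length
     left_inv := by
       intro w
       show ((g : Equiv.Perm (Vertex d))⁻¹
         ((g : Equiv.Perm (Vertex d)) v ++
           ((g : Equiv.Perm (Vertex d)) (v ++ w)).drop v.length)).drop v.length = w
       rw [← apply_append g v w, ← Equiv.Perm.mul_apply, inv_mul_cancel, Equiv.Perm.one_apply, List.drop_left]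
     right_inv := by
       intro w
       show ((g : Equiv.Perm (Vertex d))
         (v ++ ((g : Equiv.Perm (Vertex d))⁻¹
           ((g : Equiv.Perm (Vertex d)) v ++ w)).drop v.length)).drop v.length = w
       have h2 := apply_append g⁻¹ ((g : Equiv.Perm (Vertex d)) v) w
       simp only [InvMemClass.coe_inv] at h2
       rw [← Equiv.Perm.mul_apply, inv_mul_cancel, Equiv.Perm.one_apply, length_apply] at h2
       rw [← h2, ← Equiv.Perm.mul_apply, mul_inv_cancel, Equiv.Perm.one_apply, ← length_apply g v, List.drop_left] },
   by
    constructor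
    · intro w
      simp only [Equiv.coe_fn_mk, List.length_drop, length_apply, List.length_append]
      omega
    · intro w u
      simp only [Equiv.coe_fn_mk]
      rw [← List.append_assoc]
      have h0 : ((g : Equiv.Perm (Vertex d)) ((v ++ w) ++ u)).take (v ++ w).length
          = (g : Equiv.Perm (Vertex d)) (v ++ w) := take_apply g (v ++ w) u
      have h1 : w.length = (v.length + w.length) - v.length := by omega
      rw [h1, ← List.drop_take, ← List.length_append, h0]⟩

lemma sect_apply (g : TAut d) (v w : Vertex d) :
    ((sect g v : TAut d) : Equiv.Perm (Vertex d)) w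
      = ((g : Equiv.Perm (Vertex d)) (v ++ w)).drop v.length := rfl

lemma sect_mul (g h : TAut d) (v : Vertex d) :
    sect (g * h) v = sect g ((h : Equiv.Perm (Vertex d)) v) * sect h v := by
  apply Subtype.ext
  apply Equiv.ext
  intro w
  simp only [MulMemClass.coe_mul, Equiv.Perm.mul_apply, sect_apply]
  rw [← apply_append h v w, length_apply]

lemma sect_one (v : Vertex d) : sect (1 : TAut d) v = 1 := by
  apply Subtype.ext
  apply Equiv.ext
  intro w
  simp only [sect_apply, OneMemClass.coe_one, Equiv.Perm.coe_one, id_eq]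
  exact List.drop_left

end TreeFT
namespace TreeFT

variable {d : ℕ}

/-- The stabilizer `St(n)` of the `n`-th level: automorphisms acting trivially on the first
`n` levels of the tree. -/
def lst (d n : ℕ) : Subgroup (TAut d) where
  carrier := {g | ∀ v : Vertex d, v.length ≤ n → (g : Equiv.Perm (Vertex d)) v = v}
  one_mem' := fun _ _ => rfl
  mul_mem' := by
    intro g h hg hh v hv
    show (g : Equiv.Perm (Vertex d)) ((h : Equiv.Perm (Vertex d)) v) = v
    rw [hh v hv, hg v hv]
  inv_mem' := by
    intro g hg v hv
    show ((g : Equiv.Perm (Vertex d)))⁻¹ v = v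
    apply (g : Equiv.Perm (Vertex d)).injective
    rw [← Equiv.Perm.mul_apply, mul_inv_cancel, Equiv.Perm.one_apply, hg v hv]

lemma mem_lst {g : TAut d} {n : ℕ} :
    g ∈ lst d n ↔ ∀ v : Vertex d, v.length ≤ n → (g : Equiv.Perm (Vertex d)) v = v :=
  Iff.rfl

instance lst_normal (d n : ℕ) : (lst d n).Normal := by
  constructor
  intro s hs g v hv
  show (g : Equiv.Perm (Vertex d))
    ((s : Equiv.Perm (Vertex d)) (((g : Equiv.Perm (Vertex d)))⁻¹ v)) = v
  have h1 : ((g⁻¹ : TAut d) : Equiv.Perm (Vertex d)) v = ((g : Equiv.Perm (Vertex d)))⁻¹ v := by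
    simp
  have h2 : (((g : Equiv.Perm (Vertex d)))⁻¹ v).length ≤ n := by
    rw [← h1, length_apply]; exact hv
  rw [hs _ h2, ← Equiv.Perm.mul_apply, mul_inv_cancel, Equiv.Perm.one_apply]

/-- `Aut(T^n)`, the automorphism group of the finite tree consisting of the first `n` levels,
realized as the quotient of `Aut(T)` by the `n`-th level stabilizer. -/
abbrev FAut (d n : ℕ) := TAut d ⧸ lst d n

/-- `π_n : Aut(T) → Aut(T^n)`, restriction to the first `n` levels. -/
def proj (d n : ℕ) : TAut d →* FAut d n := QuotientGroup.mk' (lst d n)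

lemma proj_surjective (d n : ℕ) : Function.Surjective (proj d n) :=
  QuotientGroup.mk'_surjective _

/-- The group of finite type `G_P` of depth `D` with pattern group `P ≤ Aut(T^D)`:
all tree automorphisms whose section at every vertex acts on the first `D` levels as an
element of `P`. -/
def gft (d D : ℕ) (P : Subgroup (FAut d D)) : Subgroup (TAut d) where
  carrier := {g | ∀ v : Vertex d, proj d D (sect g v) ∈ P}
  one_mem' := by
    intro v
    rw [sect_one, map_one]
    exact one_mem P
  mul_mem' := by
    intro g h hg hh v
    rw [sect_mul, map_mul]
    exact mul_mem (hg _) (hh _)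
  inv_mem' := by
    intro g hg v
    have h2 : sect g (((g⁻¹ : TAut d) : Equiv.Perm (Vertex d)) v) * sect g⁻¹ v = 1 := by
      rw [← sect_mul, mul_inv_cancel, sect_one]
    have h3 : sect g⁻¹ v = (sect g (((g⁻¹ : TAut d) : Equiv.Perm (Vertex d)) v))⁻¹ :=
      (inv_eq_of_mul_eq_one_right h2).symm
    rw [h3, map_inv]
    exact inv_mem (hg _)

lemma mem_gft {g : TAut d} {D : ℕ} {P : Subgroup (FAut d D)} :
    g ∈ gft d D P ↔ ∀ v : Vertex d, proj d D (sect g v) ∈ P := Iff.rfl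

/-- `P ≤ Aut(T^D)` is a minimal pattern subgroup if `π_D(G_P) = P`. -/
def IsMinimalPattern (d D : ℕ) (P : Subgroup (FAut d D)) : Prop :=
  (gft d D P).map (proj d D) = P

/-- A subgroup of `Aut(T)` is level-transitive if it acts transitively on every level. -/
def LevelTransitive (H : Subgroup (TAut d)) : Prop :=
  ∀ v w : Vertex d, v.length = w.length → ∃ g ∈ H, (g : Equiv.Perm (Vertex d)) v = w

/-- A subgroup of `Aut(T)` is self-similar if it contains all sections of its elements. -/
def SelfSimilar (H : Subgroup (TAut d)) : Prop :=
  ∀ g ∈ H, ∀ v : Vertex d, sect g v ∈ H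

/-- A subgroup of `Aut(T)` is fractal if it is self-similar, level-transitive, and for every
vertex `v` the section map maps the stabilizer of `v` onto the whole group. -/
def Fractal (H : Subgroup (TAut d)) : Prop :=
  SelfSimilar H ∧ LevelTransitive H ∧
    ∀ v : Vertex d, ∀ h ∈ H, ∃ k ∈ H, (k : Equiv.Perm (Vertex d)) v = v ∧ sect k v = h

/-- The geometric product `K_n` of `K` at level `n`: elements of `St(n)` all of whose sections
at level-`n` vertices lie in `K`. -/
def geom (K : Subgroup (TAut d)) (n : ℕ) : Subgroup (TAut d) where
  carrier := {g | g ∈ lst d n ∧ ∀ v : Vertex d, v.length = n → sect g v ∈ K}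
  one_mem' := ⟨one_mem _, fun v _ => by rw [sect_one]; exact one_mem K⟩
  mul_mem' := by
    rintro g h ⟨hg1, hg2⟩ ⟨hh1, hh2⟩
    refine ⟨mul_mem hg1 hh1, fun v hv => ?_⟩
    rw [sect_mul, hh1 v hv.le]
    exact mul_mem (hg2 v hv) (hh2 v hv)
  inv_mem' := by
    rintro g ⟨hg1, hg2⟩
    refine ⟨inv_mem hg1, fun v hv => ?_⟩
    have hfix : ((g⁻¹ : TAut d) : Equiv.Perm (Vertex d)) v = v :=
      (inv_mem hg1 : g⁻¹ ∈ lst d n) v hv.le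
    have h2 : sect g v * sect g⁻¹ v = 1 := by
      have := sect_mul g g⁻¹ v
      rw [mul_inv_cancel, sect_one, hfix] at this
      exact this.symm
    rw [(inv_eq_of_mul_eq_one_right h2).symm]
    exact inv_mem (hg2 v hv)

end TreeFT
namespace TreeFT

variable {d : ℕ}

/-- The congruence topology on `Aut(T)`: the topology of pointwise convergence on the vertex
set (each vertex set carrying the discrete topology); the level stabilizers `St(n)` form a
base of neighborhoods of the identity for it. -/
instance tautTopologicalSpace (d : ℕ) : TopologicalSpace (TAut d) :=
  TopologicalSpace.induced
    (fun g : TAut d => ((g : Equiv.Perm (Vertex d)) : Vertex d → Vertex d))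
    (@Pi.topologicalSpace (Vertex d) (fun _ => Vertex d) (fun _ => ⊥))

lemma isOpen_eval (d : ℕ) (v u : Vertex d) :
    IsOpen {g : TAut d | (g : Equiv.Perm (Vertex d)) v = u} := by
  letI : TopologicalSpace (Vertex d) := ⊥
  haveI : DiscreteTopology (Vertex d) := ⟨rfl⟩
  have h : IsOpen ((fun f : Vertex d → Vertex d => f v) ⁻¹' {u}) :=
    (isOpen_discrete ({u} : Set (Vertex d))).preimage (continuous_apply v)
  exact isOpen_induced h

lemma isOpen_eval_mem (d : ℕ) (v : Vertex d) (s : Set (Vertex d)) :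
    IsOpen {g : TAut d | (g : Equiv.Perm (Vertex d)) v ∈ s} := by
  have h : {g : TAut d | (g : Equiv.Perm (Vertex d)) v ∈ s}
      = ⋃ u ∈ s, {g : TAut d | (g : Equiv.Perm (Vertex d)) v = u} := by
    ext g; simp
  rw [h]
  exact isOpen_biUnion fun u _ => isOpen_eval d v u

lemma continuous_into_vertex {X : Type*} [TopologicalSpace X] (f : X → Vertex d)
    (h : ∀ u : Vertex d, IsOpen (f ⁻¹' {u})) :
    @Continuous X (Vertex d) _ ⊥ f := by
  rw [continuous_def]
  intro s _
  have hs : f ⁻¹' s = ⋃ u ∈ s, f ⁻¹' {u} := by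
    ext x; simp
  rw [hs]
  exact isOpen_biUnion fun u _ => h u

instance tautContinuousMul (d : ℕ) : ContinuousMul (TAut d) := by
  constructor
  · -- continuity of multiplication
    apply continuous_induced_rng.2
    apply @continuous_pi _ _ _ _ (fun _ => (⊥ : TopologicalSpace (Vertex d)))
    intro v
    apply continuous_into_vertex
      (f := fun p : TAut d × TAut d => ((p.1 * p.2 : TAut d) : Equiv.Perm (Vertex d)) v)
    intro u
    have h : (fun p : TAut d × TAut d =>
          ((p.1 * p.2 : TAut d) : Equiv.Perm (Vertex d)) v) ⁻¹' {u}
        = ⋃ w : Vertex d, ({g : TAut d | (g : Equiv.Perm (Vertex d)) w = u} ×ˢ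
            {h : TAut d | (h : Equiv.Perm (Vertex d)) v = w}) := by
      ext p
      simp only [Set.mem_preimage, Set.mem_singleton_iff, Set.mem_iUnion, Set.mem_prod,
        Set.mem_setOf_eq]
      constructor
      · intro hp
        exact ⟨(p.2 : Equiv.Perm (Vertex d)) v, hp, rfl⟩
      · rintro ⟨w, hw1, hw2⟩
        show (p.1 : Equiv.Perm (Vertex d)) ((p.2 : Equiv.Perm (Vertex d)) v) = u
        rw [hw2]; exact hw1
    rw [h]
    exact isOpen_iUnion fun w => (isOpen_eval d w u).prod (isOpen_eval d v w)

instance tautContinuousInv (d : ℕ) : ContinuousInv (TAut d) := by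
  constructor
  · -- continuity of inversion
    apply continuous_induced_rng.2
    apply @continuous_pi _ _ _ _ (fun _ => (⊥ : TopologicalSpace (Vertex d)))
    intro v
    apply continuous_into_vertex
      (f := fun g : TAut d => ((g⁻¹ : TAut d) : Equiv.Perm (Vertex d)) v)
    intro u
    have h : (fun g : TAut d => ((g⁻¹ : TAut d) : Equiv.Perm (Vertex d)) v) ⁻¹' {u}
        = {g : TAut d | (g : Equiv.Perm (Vertex d)) u = v} := by
      ext g
      simp only [Set.mem_preimage, Set.mem_singleton_iff, Set.mem_setOf_eq,
        InvMemClass.coe_inv]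
      constructor
      · intro hg; rw [← hg, ← Equiv.Perm.mul_apply, mul_inv_cancel, Equiv.Perm.one_apply]
      · intro hg; rw [← hg, ← Equiv.Perm.mul_apply, inv_mul_cancel, Equiv.Perm.one_apply]
    rw [h]
    exact isOpen_eval d u v

instance tautTopologicalGroup (d : ℕ) : IsTopologicalGroup (TAut d) := ⟨⟩

/-- A subgroup of `Aut(T)` (viewed as a topological group with the congruence topology) is
topologically finitely generated if it contains a finitely generated dense subgroup. -/
def TopFG (H : Subgroup (TAut d)) : Prop :=
  ∃ S : Set ↥H, S.Finite ∧ Dense ((Subgroup.closure S : Subgroup ↥H) : Set ↥H)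

/-- A profinite group is just-infinite if it is infinite and every nontrivial closed normal
subgroup has finite index. -/
def JustInfinite (H : Subgroup (TAut d)) : Prop :=
  Infinite ↥H ∧ ∀ N : Subgroup ↥H, N.Normal → IsClosed (N : Set ↥H) → N ≠ ⊥ → N.index ≠ 0

/-- A profinite group is strongly complete if every subgroup of finite index is open. -/
def StronglyComplete (H : Subgroup (TAut d)) : Prop :=
  ∀ N : Subgroup ↥H, N.index ≠ 0 → IsOpen (N : Set ↥H)

end TreeFT

namespace TreeFT

/-- The natural restriction map `Aut(T^n) → Aut(T^m)` for `m ≤ n`. -/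
def levelProj (d : ℕ) {m n : ℕ} (h : m ≤ n) : FAut d n →* FAut d m :=
  QuotientGroup.map (lst d n) (lst d m) (MonoidHom.id _) (by
    intro g hg
    rw [Subgroup.mem_comap]
    intro v hv
    exact hg v (hv.trans h))

variable {d : ℕ}

lemma apply_nil' (g : TAut d) : (g : Equiv.Perm (Vertex d)) [] = [] :=
  List.length_eq_zero_iff.mp (length_apply g [])

lemma sect_nil (g : TAut d) : sect g [] = g := by
  apply Subtype.ext
  apply Equiv.ext
  intro w
  simp [sect_apply]

lemma proj_eq_iff {n : ℕ} {g h : TAut d} :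
    proj d n g = proj d n h ↔ ∀ u : Vertex d, u.length ≤ n →
      (g : Equiv.Perm (Vertex d)) u = (h : Equiv.Perm (Vertex d)) u := by
  have : proj d n g = proj d n h ↔ g⁻¹ * h ∈ lst d n := QuotientGroup.eq
  rw [this, mem_lst]
  constructor
  · intro hm u hu
    have := hm u hu
    simp only [MulMemClass.coe_mul, InvMemClass.coe_inv, Equiv.Perm.mul_apply] at this
    have := congrArg (g : Equiv.Perm (Vertex d)) this
    rw [← Equiv.Perm.mul_apply, mul_inv_cancel, Equiv.Perm.one_apply] at this
    exact this.symm
  · intro hm u hu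
    simp only [MulMemClass.coe_mul, InvMemClass.coe_inv, Equiv.Perm.mul_apply]
    rw [← hm u hu, ← Equiv.Perm.mul_apply, inv_mul_cancel, Equiv.Perm.one_apply]

lemma levelProj_proj {m n : ℕ} (h : m ≤ n) (g : TAut d) :
    levelProj d h (proj d n g) = proj d m g := rfl

/-- The level-one permutation induced by `r v`. -/
noncomputable def sigmaMap (r : Vertex d → TAut d) (v : Vertex d) (x : Fin d) : Fin d :=
  (((r v : TAut d) : Equiv.Perm (Vertex d)) [x]).head (by
    have h := length_apply (r v) [x]
    intro hn
    rw [hn] at h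
    simp at h)

lemma apply_single (r : Vertex d → TAut d) (v : Vertex d) (x : Fin d) :
    ((r v : TAut d) : Equiv.Perm (Vertex d)) [x] = [sigmaMap r v x] := by
  have h := length_apply (r v) [x]
  obtain ⟨a, ha⟩ := List.length_eq_one_iff.mp h
  simp [sigmaMap, ha]

lemma sigmaMap_injective (r : Vertex d → TAut d) (v : Vertex d) :
    Function.Injective (sigmaMap r v) := by
  intro x y hxy
  have : ((r v : TAut d) : Equiv.Perm (Vertex d)) [x]
      = ((r v : TAut d) : Equiv.Perm (Vertex d)) [y] := by
    rw [apply_single, apply_single, hxy]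
  have := ((r v : TAut d) : Equiv.Perm (Vertex d)).injective this
  simpa using this

/-- The action of the automorphism built from the vertex-indexed family `r`. -/
noncomputable def bigG (r : Vertex d → TAut d) : Vertex d → Vertex d → Vertex d
  | _, [] => []
  | v, x :: w => sigmaMap r v x :: bigG r (v ++ [x]) w

lemma bigG_length (r : Vertex d → TAut d) :
    ∀ (w v : Vertex d), (bigG r v w).length = w.length := by
  intro w
  induction w with
  | nil => intro v; rfl
  | cons x w ih => intro v; simp [bigG, ih]

lemma bigG_append (r : Vertex d → TAut d) :
    ∀ (a v b : Vertex d), bigG r v (a ++ b) = bigG r v a ++ bigG r (v ++ a) b := by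
  intro a
  induction a with
  | nil => intro v b; simp [bigG]
  | cons x a ih =>
      intro v b
      show sigmaMap r v x :: bigG r (v ++ [x]) (a ++ b)
        = sigmaMap r v x :: bigG r (v ++ [x]) a ++ bigG r (v ++ x :: a) b
      rw [ih, List.append_assoc]
      rfl

lemma bigG_injective (r : Vertex d → TAut d) :
    ∀ (w u v : Vertex d), bigG r v w = bigG r v u → w = u := by
  intro w
  induction w with
  | nil =>
      intro u v h
      cases u with
      | nil => rfl
      | cons y u => exact absurd h (by simp [bigG])
  | cons x w ih =>
      intro u v h
      cases u with
      | nil => exact absurd h (by simp [bigG])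
      | cons y u =>
          simp only [bigG, List.cons.injEq] at h
          obtain ⟨h1, h2⟩ := h
          have hx : x = y := sigmaMap_injective r v h1
          subst hx
          exact congrArg (x :: ·) (ih u (v ++ [x]) h2)

lemma bigG_surjective (r : Vertex d → TAut d) :
    ∀ (z v : Vertex d), ∃ w, bigG r v w = z := by
  intro z
  induction z with
  | nil => intro v; exact ⟨[], rfl⟩
  | cons a z ih =>
      intro v
      obtain ⟨x, hx⟩ := (Finite.injective_iff_surjective.mp (sigmaMap_injective r v)) a
      obtain ⟨w, hw⟩ := ih (v ++ [x])
      exact ⟨x :: w, by simp [bigG, hx, hw]⟩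

/-- The tree automorphism built from a vertex-indexed family `r`. -/
noncomputable def gOf (r : Vertex d → TAut d) : TAut d :=
  ⟨Equiv.ofBijective (bigG r [])
      ⟨fun a b h => bigG_injective r a b [] h, fun z => bigG_surjective r z []⟩, by
    constructor
    · intro v
      exact bigG_length r v []
    · intro v w
      show (bigG r [] (v ++ w)).take v.length = bigG r [] v
      rw [bigG_append]
      have hl : v.length = (bigG r [] v).length := (bigG_length r v []).symm
      rw [hl, List.take_left]⟩

lemma gOf_apply (r : Vertex d → TAut d) (w : Vertex d) :
    ((gOf r : TAut d) : Equiv.Perm (Vertex d)) w = bigG r [] w := rfl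

lemma sect_gOf (r : Vertex d → TAut d) (v w : Vertex d) :
    ((sect (gOf r) v : TAut d) : Equiv.Perm (Vertex d)) w = bigG r v w := by
  rw [sect_apply, gOf_apply, bigG_append]
  have hl : v.length = (bigG r [] v).length := (bigG_length r v []).symm
  rw [hl, List.drop_left]
  simp

lemma bigG_eq (D : ℕ) (hD : 1 ≤ D) (r : Vertex d → TAut d)
    (hcompat : ∀ (v : Vertex d) (x : Fin d) (w : Vertex d), w.length ≤ D - 1 →
      ((sect (r v) [x] : TAut d) : Equiv.Perm (Vertex d)) w
        = ((r (v ++ [x]) : TAut d) : Equiv.Perm (Vertex d)) w) :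
    ∀ w : Vertex d, w.length ≤ D → ∀ v : Vertex d,
      bigG r v w = ((r v : TAut d) : Equiv.Perm (Vertex d)) w := by
  intro w
  induction w with
  | nil => intro _ v; rw [apply_nil']; rfl
  | cons x w ih =>
      intro hw v
      have hw' : w.length ≤ D := by simp at hw; omega
      have hw'' : w.length ≤ D - 1 := by simp at hw; omega
      have h1 : (x :: w : Vertex d) = [x] ++ w := rfl
      rw [h1, apply_append (r v) [x] w]
      have h2 : (((r v : TAut d) : Equiv.Perm (Vertex d)) ([x] ++ w)).drop [x].length
          = ((sect (r v) [x] : TAut d) : Equiv.Perm (Vertex d)) w := rfl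
      rw [h2, hcompat v x w hw'', apply_single]
      show sigmaMap r v x :: bigG r (v ++ [x]) w = _
      rw [ih hw' (v ++ [x])]
      rfl

/-- A subgroup `P ≤ Aut(T^D)` is a minimal pattern subgroup
(`π_D(G_P) = P`) if and only if it is closed under patterns of itself: for every `p ∈ P` and
every level-one vertex `x`, the section `p|_x ∈ Aut(T^{D−1})` lies in `π_{D−1}(P)`. -/
theorem statement_14 (d D : ℕ) (hD : 1 ≤ D) (P : Subgroup (FAut d D)) :
    IsMinimalPattern d D P ↔
      ∀ g : TAut d, proj d D g ∈ P → ∀ x : Fin d,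
        proj d (D - 1) (sect g [x]) ∈ P.map (levelProj d (Nat.sub_le D 1)) := by
  constructor
  · -- minimal pattern → closed under patterns
    intro hmin g hg x
    rw [← hmin] at hg
    obtain ⟨h, hh, hhe⟩ := Subgroup.mem_map.mp hg
    have heq : proj d (D - 1) (sect g [x]) = proj d (D - 1) (sect h [x]) := by
      apply proj_eq_iff.mpr
      intro u hu
      rw [sect_apply, sect_apply]
      have hlen : ([x] ++ u : Vertex d).length ≤ D := by simp; omega
      rw [proj_eq_iff.mp hhe ([x] ++ u) hlen]
    rw [heq]
    exact Subgroup.mem_map.mpr ⟨proj d D (sect h [x]), hh [x],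
      levelProj_proj (Nat.sub_le D 1) (sect h [x])⟩
  · -- closed under patterns → minimal pattern
    intro hcl
    apply le_antisymm
    · rintro q hq
      obtain ⟨g, hg, rfl⟩ := Subgroup.mem_map.mp hq
      have := hg []
      rwa [sect_nil] at this
    · intro p hp
      obtain ⟨g₀, hg₀⟩ := proj_surjective d D p
      -- step function: extend a pattern-compatible element in direction x
      have hstep : ∀ (s : {h : TAut d // proj d D h ∈ P}) (x : Fin d),
          ∃ t : {h : TAut d // proj d D h ∈ P},
            proj d (D - 1) (t : TAut d) = proj d (D - 1) (sect s.1 [x]) := by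
        intro s x
        obtain ⟨q, hqP, hq⟩ := Subgroup.mem_map.mp (hcl s.1 s.2 x)
        obtain ⟨g', hg'⟩ := proj_surjective d D q
        refine ⟨⟨g', by rw [hg']; exact hqP⟩, ?_⟩
        show levelProj d (Nat.sub_le D 1) (proj d D g') = proj d (D - 1) (sect s.1 [x])
        rw [hg', hq]
      choose step hspec using hstep
      let r' : Vertex d → {h : TAut d // proj d D h ∈ P} :=
        fun u => List.rec ⟨g₀, by rw [hg₀]; exact hp⟩ (fun x _ ih => step ih x) u
      let r : Vertex d → TAut d := fun v => (r' v.reverse).1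
      have hrP : ∀ v : Vertex d, proj d D (r v) ∈ P := fun v => (r' v.reverse).2
      have hr0 : proj d D (r []) = p := hg₀
      have hcompat : ∀ (v : Vertex d) (x : Fin d) (w : Vertex d), w.length ≤ D - 1 →
          ((sect (r v) [x] : TAut d) : Equiv.Perm (Vertex d)) w
            = ((r (v ++ [x]) : TAut d) : Equiv.Perm (Vertex d)) w := by
        intro v x w hw
        have hrev : (v ++ [x]).reverse = x :: v.reverse := by simp
        have h1 : r (v ++ [x]) = (step (r' v.reverse) x).1 := by
          show (r' (v ++ [x]).reverse).1 = _
          rw [hrev]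
        rw [h1]
        exact (proj_eq_iff.mp (hspec (r' v.reverse) x) w hw).symm
      refine Subgroup.mem_map.mpr ⟨gOf r, ?_, ?_⟩
      · intro v
        have key : proj d D (sect (gOf r) v) = proj d D (r v) :=
          proj_eq_iff.mpr fun u hu => by
            rw [sect_gOf, bigG_eq D hD r hcompat u hu v]
        rw [key]
        exact hrP v
      · have : proj d D (gOf r) = proj d D (r []) := by
          apply proj_eq_iff.mpr
          intro u hu
          rw [gOf_apply, bigG_eq D hD r hcompat u hu []]
        rw [this, hr0]

end TreeFT
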